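/- arXiv:2512.10906 — 4 statements merged into one kernel-verified Lean document; each statement's English description precedes it below -/
import Mathlib

section
/- Let r ≥ 0, y₀ ∈ ℝⁿ, C ∈ ℝ^{m×n}, and D ∈ S^m_{++}. Then min_{x∈ℝ^m} max_{y∈ℝⁿ : ‖y−y₀‖₂² ≤ r} (x+Cy)ᵀD(x+Cy) = r‖CᵀDC‖_∞, and this value is attained by x* = −Cy₀ and y* = y₀ ± √r ξ, where ξ is a unit eigenvector of CᵀDC corresponding to its largest eigenvalue. -/
open Matrix
open scoped ENNReal

noncomputable def singVals {n : ℕ} (A : Matrix (Fin n) (Fin n) ℝ) : Fin n → ℝ :=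
  fun i => Real.sqrt ((Matrix.isHermitian_conjTranspose_mul_self A).eigenvalues i)

/-- The Schatten `p`-norm of a square real matrix, defined via its singular values. -/
noncomputable def schattenNorm {n : ℕ} (p : ℝ≥0∞) (A : Matrix (Fin n) (Fin n) ℝ) : ℝ :=
  if p = ⊤ then ⨆ i, singVals A i
  else (∑ i, singVals A i ^ p.toReal) ^ (1 / p.toReal)

/-- Quadratic form of a hermitian matrix is bounded by any upper bound on its eigenvalues. -/
lemma quad_form_le {n : ℕ} (H : Matrix (Fin n) (Fin n) ℝ) (hH : H.IsHermitian)
    (b : ℝ) (hb : ∀ i, hH.eigenvalues i ≤ b) (z : Fin n → ℝ) :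
    z ⬝ᵥ (H *ᵥ z) ≤ b * (z ⬝ᵥ z) := by
  set U : Matrix (Fin n) (Fin n) ℝ := (hH.eigenvectorUnitary : Matrix (Fin n) (Fin n) ℝ) with hUdef
  have hstar : star U = Uᵀ := by
    simp [Matrix.star_eq_conjTranspose]
  have hU1 : U * Uᵀ = 1 := by
    rw [← hstar]; exact (Matrix.mem_unitaryGroup_iff).mp hH.eigenvectorUnitary.2
  set w := Uᵀ *ᵥ z with hw
  have hspec := hH.spectral_theorem
  have hz : z ⬝ᵥ (H *ᵥ z) = ∑ i, hH.eigenvalues i * w i ^ 2 := by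
    conv_lhs => rw [hspec, Unitary.conjStarAlgAut_apply, hstar]
    rw [← mulVec_mulVec, ← mulVec_mulVec, dotProduct_mulVec, ← mulVec_transpose]
    rw [← hUdef, ← hw, dotProduct]
    congr 1; ext i
    simp [mulVec_diagonal]
    ring
  have hzz : z ⬝ᵥ z = ∑ i, w i ^ 2 := by
    have : w ⬝ᵥ w = z ⬝ᵥ ((U * Uᵀ) *ᵥ z) := by
      rw [hw, ← mulVec_mulVec, dotProduct_mulVec, ← mulVec_transpose, transpose_transpose,
        mulVec_mulVec, dotProduct_comm]
    rw [show (∑ i, w i ^ 2) = w ⬝ᵥ w by simp [dotProduct, sq], this, hU1, one_mulVec]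
  rw [hz, hzz, Finset.mul_sum]
  exact Finset.sum_le_sum fun i _ => mul_le_mul_of_nonneg_right (hb i) (sq_nonneg _)

/-- For `r ≥ 0`, `y₀ ∈ ℝⁿ`, `C ∈ ℝ^{m×n}`, `D ≻ 0`:
`min_x max_{‖y-y₀‖₂² ≤ r} (x+Cy)ᵀD(x+Cy) = r‖CᵀDC‖_∞`, attained at `x⋆ = -Cy₀` and
`y⋆ = y₀ ± √r ξ` with `ξ` a unit leading eigenvector of `CᵀDC`. -/
theorem stmt0 {m n : ℕ} (r : ℝ) (hr : 0 ≤ r) (y₀ : Fin n → ℝ)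
    (C : Matrix (Fin m) (Fin n) ℝ) (D : Matrix (Fin m) (Fin m) ℝ) (hD : D.PosDef)
    (ξ : Fin n → ℝ) (hξunit : ∑ i, ξ i ^ 2 = 1)
    (hξeig : (Cᵀ * D * C) *ᵥ ξ = schattenNorm ⊤ (Cᵀ * D * C) • ξ) :
    -- the value `r‖CᵀDC‖_∞` is a lower bound on the inner maximum for every `x`:
    (∀ x : Fin m → ℝ, ∃ y : Fin n → ℝ, (∑ i, (y i - y₀ i) ^ 2) ≤ r ∧
        r * schattenNorm ⊤ (Cᵀ * D * C) ≤ (x + C *ᵥ y) ⬝ᵥ (D *ᵥ (x + C *ᵥ y))) ∧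
    -- `x⋆ = -Cy₀` achieves it: the inner maximum at `x⋆` is at most `r‖CᵀDC‖_∞`:
    (∀ y : Fin n → ℝ, (∑ i, (y i - y₀ i) ^ 2) ≤ r →
        (-(C *ᵥ y₀) + C *ᵥ y) ⬝ᵥ (D *ᵥ (-(C *ᵥ y₀) + C *ᵥ y)) ≤
          r * schattenNorm ⊤ (Cᵀ * D * C)) ∧
    -- and the inner maximum at `x⋆` is attained by `y⋆ = y₀ ± √r ξ`:
    (∀ s : ℝ, s = 1 ∨ s = -1 →
        (∑ i, ((y₀ i + s * Real.sqrt r * ξ i) - y₀ i) ^ 2) ≤ r ∧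
        (-(C *ᵥ y₀) + C *ᵥ (fun i => y₀ i + s * Real.sqrt r * ξ i)) ⬝ᵥ
            (D *ᵥ (-(C *ᵥ y₀) + C *ᵥ (fun i => y₀ i + s * Real.sqrt r * ξ i))) =
          r * schattenNorm ⊤ (Cᵀ * D * C)) := by
  set M : Matrix (Fin n) (Fin n) ℝ := Cᵀ * D * C with hM
  set lam : ℝ := schattenNorm ⊤ M with hlamdef
  have hlam_eq : lam = ⨆ i, singVals M i := by rw [hlamdef, schattenNorm, if_pos rfl]
  -- n is nonzero
  have hn : Nonempty (Fin n) := by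
    rcases Nat.eq_zero_or_pos n with h | h
    · subst h; simp at hξunit
    · exact ⟨⟨0, h⟩⟩
  -- lam is nonnegative
  have hlam0 : 0 ≤ lam := by
    rw [hlam_eq]
    obtain ⟨i⟩ := hn
    refine le_trans ?_ (le_ciSup (Set.Finite.bddAbove (Set.finite_range (singVals M))) i)
    exact Real.sqrt_nonneg _
  -- dot with self is sum of squares
  have hdsq : ∀ z : Fin n → ℝ, z ⬝ᵥ z = ∑ i, z i ^ 2 := by
    intro z; simp [dotProduct, sq]
  -- value of quadratic form at ξ
  have hxiM : ξ ⬝ᵥ (M *ᵥ ξ) = lam := by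
    rw [hξeig, dotProduct_smul, smul_eq_mul, hdsq, hξunit, mul_one]
  -- (Cz)ᵀ D (Cz) = zᵀ M z
  have hCz : ∀ z : Fin n → ℝ, (C *ᵥ z) ⬝ᵥ (D *ᵥ (C *ᵥ z)) = z ⬝ᵥ (M *ᵥ z) := by
    intro z
    conv_rhs => rw [hM, ← mulVec_mulVec, ← mulVec_mulVec, dotProduct_mulVec, vecMul_transpose]
  -- key bound : zᵀ M z ≤ lam * zᵀz
  have hkey : ∀ z : Fin n → ℝ, z ⬝ᵥ (M *ᵥ z) ≤ lam * (z ⬝ᵥ z) := by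
    intro z
    have hHpsd : (Mᵀ * M).PosSemidef := by
      have := Matrix.posSemidef_conjTranspose_mul_self M
      rwa [Matrix.conjTranspose_eq_transpose_of_trivial] at this
    have hb : ∀ i, (Matrix.isHermitian_conjTranspose_mul_self M).eigenvalues i ≤ lam ^ 2 := by
      intro i
      have h0 : 0 ≤ (Matrix.isHermitian_conjTranspose_mul_self M).eigenvalues i :=
        hHpsd.eigenvalues_nonneg i
      have hs : singVals M i ≤ lam := by
        rw [hlam_eq]
        exact le_ciSup (Set.Finite.bddAbove (Set.finite_range _)) i
      calc (Matrix.isHermitian_conjTranspose_mul_self M).eigenvalues i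
          = (singVals M i) ^ 2 := by rw [singVals, Real.sq_sqrt h0]
        _ ≤ lam ^ 2 := by
            have h2 : 0 ≤ singVals M i := Real.sqrt_nonneg _
            exact pow_le_pow_left₀ h2 hs 2
    have hH : (M *ᵥ z) ⬝ᵥ (M *ᵥ z) ≤ lam ^ 2 * (z ⬝ᵥ z) := by
      have heq : z ⬝ᵥ ((Mᵀ * M) *ᵥ z) = (M *ᵥ z) ⬝ᵥ (M *ᵥ z) := by
        rw [← mulVec_mulVec, dotProduct_mulVec, vecMul_transpose]
      rw [← heq]
      exact quad_form_le _ (Matrix.isHermitian_conjTranspose_mul_self M) _ hb z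
    -- Cauchy-Schwarz
    have hcs : (z ⬝ᵥ (M *ᵥ z)) ^ 2 ≤ (z ⬝ᵥ z) * ((M *ᵥ z) ⬝ᵥ (M *ᵥ z)) := by
      have h2 := Finset.sum_mul_sq_le_sq_mul_sq Finset.univ z (M *ᵥ z)
      simpa [dotProduct, sq] using h2
    have hz0 : 0 ≤ z ⬝ᵥ z := by rw [hdsq]; positivity
    have h1 : (z ⬝ᵥ (M *ᵥ z)) ^ 2 ≤ (lam * (z ⬝ᵥ z)) ^ 2 := by
      nlinarith [hcs, mul_le_mul_of_nonneg_left hH hz0]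
    have h2 : 0 ≤ lam * (z ⬝ᵥ z) := mul_nonneg hlam0 hz0
    nlinarith [h1, h2]
  -- symmetric D facts
  have hDT : Dᵀ = D := by
    have := hD.1
    rwa [Matrix.IsHermitian, Matrix.conjTranspose_eq_transpose_of_trivial] at this
  have hDsym : ∀ u v : Fin m → ℝ, v ⬝ᵥ (D *ᵥ u) = u ⬝ᵥ (D *ᵥ v) := by
    intro u v
    rw [dotProduct_mulVec, ← mulVec_transpose, hDT, dotProduct_comm]
  have hDpos : ∀ u : Fin m → ℝ, 0 ≤ u ⬝ᵥ (D *ᵥ u) := by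
    intro u
    have := hD.posSemidef.dotProduct_mulVec_nonneg u
    simpa using this
  -- the perturbed point `y₀ + t ξ` facts
  have hpt : ∀ s : ℝ, s = 1 ∨ s = -1 →
      (fun i => y₀ i + s * Real.sqrt r * ξ i) = y₀ + (s * Real.sqrt r) • ξ := by
    intro s _; funext i; simp [mul_assoc]
  have hs2 : ∀ s : ℝ, s = 1 ∨ s = -1 → s ^ 2 = 1 := by
    rintro s (rfl | rfl) <;> norm_num
  have hconstraint : ∀ s : ℝ, s = 1 ∨ s = -1 →
      (∑ i, ((y₀ i + s * Real.sqrt r * ξ i) - y₀ i) ^ 2) ≤ r := by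
    intro s hs
    have : (∑ i, ((y₀ i + s * Real.sqrt r * ξ i) - y₀ i) ^ 2)
        = s ^ 2 * (Real.sqrt r) ^ 2 * ∑ i, ξ i ^ 2 := by
      rw [Finset.mul_sum]; congr 1; funext i; ring
    rw [this, hs2 s hs, Real.sq_sqrt hr, hξunit]
    simp
  -- value at the perturbed point with x⋆
  have hval : ∀ s : ℝ, s = 1 ∨ s = -1 →
      (-(C *ᵥ y₀) + C *ᵥ (fun i => y₀ i + s * Real.sqrt r * ξ i)) ⬝ᵥ
          (D *ᵥ (-(C *ᵥ y₀) + C *ᵥ (fun i => y₀ i + s * Real.sqrt r * ξ i))) = r * lam := by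
    intro s hs
    rw [hpt s hs, mulVec_add, mulVec_smul]
    have harg : -(C *ᵥ y₀) + (C *ᵥ y₀ + (s * Real.sqrt r) • (C *ᵥ ξ))
        = C *ᵥ ((s * Real.sqrt r) • ξ) := by
      rw [mulVec_smul]; abel
    rw [harg, hCz, mulVec_smul, dotProduct_smul, smul_dotProduct, smul_eq_mul, smul_eq_mul,
      hxiM, ← mul_assoc]
    have : s * Real.sqrt r * (s * Real.sqrt r) = s ^ 2 * ((Real.sqrt r) ^ 2) := by ring
    rw [this, hs2 s hs, Real.sq_sqrt hr, one_mul]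
  refine ⟨?_, ?_, fun s hs => ⟨hconstraint s hs, hval s hs⟩⟩
  · -- part 1: lower bound for every x
    intro x
    set u : Fin m → ℝ := x + C *ᵥ y₀ with hu
    set a : ℝ := u ⬝ᵥ (D *ᵥ (C *ᵥ ξ)) with ha
    set s : ℝ := if 0 ≤ a then 1 else -1 with hsdef
    have hs : s = 1 ∨ s = -1 := by
      rw [hsdef]; split <;> simp
    refine ⟨fun i => y₀ i + s * Real.sqrt r * ξ i, hconstraint s hs, ?_⟩
    have hsa : 0 ≤ s * a := by
      rw [hsdef]; split_ifs with h
      · simpa using h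
      · push_neg at h; nlinarith
    rw [hpt s hs, mulVec_add, mulVec_smul]
    set t : ℝ := s * Real.sqrt r with ht
    have hxarg : x + (C *ᵥ y₀ + t • (C *ᵥ ξ)) = u + t • (C *ᵥ ξ) := by
      rw [hu]; abel
    rw [hxarg]
    set v : Fin m → ℝ := C *ᵥ ξ with hv
    have hexp : (u + t • v) ⬝ᵥ (D *ᵥ (u + t • v))
        = u ⬝ᵥ (D *ᵥ u) + 2 * t * a + t ^ 2 * (v ⬝ᵥ (D *ᵥ v)) := by
      have h1 : v ⬝ᵥ (D *ᵥ u) = a := (hDsym u v).trans ha.symm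
      simp only [mulVec_add, mulVec_smul, dotProduct_add, add_dotProduct, dotProduct_smul,
        smul_dotProduct, smul_eq_mul]
      rw [h1, ← ha]
      ring
    rw [hexp]
    have hvDv : v ⬝ᵥ (D *ᵥ v) = lam := by rw [hv, hCz, hxiM]
    have ht2 : t ^ 2 = r := by
      rw [ht, mul_pow, hs2 s hs, Real.sq_sqrt hr, one_mul]
    have hta : 0 ≤ t * a := by
      rw [ht, mul_comm s (Real.sqrt r), mul_assoc]
      exact mul_nonneg (Real.sqrt_nonneg r) hsa
    rw [hvDv, ht2]
    nlinarith [hDpos u, hta]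
  · -- part 2: upper bound at x⋆ = -C y₀
    intro y hy
    have harg : -(C *ᵥ y₀) + C *ᵥ y = C *ᵥ (y - y₀) := by
      rw [mulVec_sub]; abel
    rw [harg, hCz]
    calc (y - y₀) ⬝ᵥ (M *ᵥ (y - y₀)) ≤ lam * ((y - y₀) ⬝ᵥ (y - y₀)) := hkey _
      _ ≤ lam * r := by
          apply mul_le_mul_of_nonneg_left _ hlam0
          rw [hdsq]
          simpa using hy
      _ = r * lam := mul_comm _ _
end

section
/- Let L ⊆ ℝ^{m×n} be a linear subspace, D ∈ S^m_{++}, K° ∈ ℝ^{m×n}, C(K) := (K−K°)ᵀD(K−K°), and define g(Λ₁,Λ₂) := inf_{K∈L} tr((Λ₁+Λ₂)C(K)) as a function on the real vector space Sⁿ × Sⁿ. Then at any point (Λ̄₁,Λ̄₂) ∈ S₊ⁿ × S₊ⁿ with Λ̄₁ + Λ̄₂ ≻ 0, the function g is Fréchet differentiable, with derivative given by the linear map (A₁,A₂) ↦ tr(C(K*)·(A₁+A₂)), where K* is the unique minimizer of K ↦ tr((Λ̄₁+Λ̄₂)C(K)) over L. -/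
open Matrix
open scoped ENNReal

attribute [local instance] Matrix.frobeniusNormedAddCommGroup Matrix.frobeniusNormedSpace

/-- The continuous linear functional `(A₁, A₂) ↦ tr(M(A₁+A₂))` on pairs of matrices. -/
noncomputable def traceCLM {n : ℕ} (M : Matrix (Fin n) (Fin n) ℝ) :
    (Matrix (Fin n) (Fin n) ℝ × Matrix (Fin n) (Fin n) ℝ) →L[ℝ] ℝ :=
  LinearMap.toContinuousLinearMap
    { toFun := fun A => (M * (A.1 + A.2)).trace
      map_add' := by
        intro A B
        simp [Matrix.mul_add, Matrix.trace_add]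
        ring
      map_smul' := by
        intro c A
        simp [Matrix.mul_smul, Matrix.trace_smul, smul_add, mul_add] }

/-! ### Auxiliary lemmas -/

lemma frobNormSq {p q : ℕ} (A : Matrix (Fin p) (Fin q) ℝ) :
    ‖A‖ ^ 2 = ∑ i, ∑ j, (A i j) ^ 2 := by
  rw [Matrix.frobenius_norm_def]
  rw [← Real.rpow_natCast _ 2, ← Real.rpow_mul (by positivity)]
  norm_num

lemma traceTransposeMul {p q : ℕ} (A : Matrix (Fin p) (Fin q) ℝ) :
    (Aᵀ * A).trace = ‖A‖ ^ 2 := by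
  rw [frobNormSq, Matrix.trace]
  simp [Matrix.diag, Matrix.mul_apply, sq]
  exact Finset.sum_comm

lemma traceCS {p : ℕ} (A B : Matrix (Fin p) (Fin p) ℝ) :
    |(A * B).trace| ≤ ‖A‖ * ‖B‖ := by
  have h1 : (A * B).trace = ∑ ij : Fin p × Fin p, A ij.1 ij.2 * B ij.2 ij.1 := by
    rw [Matrix.trace]
    simp [Matrix.diag, Matrix.mul_apply]
    rw [← Finset.sum_product']
    rfl
  have h2 := Finset.sum_mul_sq_le_sq_mul_sq Finset.univ
    (fun ij : Fin p × Fin p => A ij.1 ij.2) (fun ij : Fin p × Fin p => B ij.2 ij.1)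
  have hA : ∑ ij : Fin p × Fin p, (A ij.1 ij.2) ^ 2 = ‖A‖ ^ 2 := by
    rw [frobNormSq, ← Finset.sum_product']; rfl
  have hB : ∑ ij : Fin p × Fin p, (B ij.2 ij.1) ^ 2 = ‖B‖ ^ 2 := by
    rw [frobNormSq]
    rw [← Finset.sum_product']
    exact Fintype.sum_equiv (Equiv.prodComm _ _) _ _ (fun ij => rfl)
  rw [hA, hB, ← h1] at h2
  nlinarith [abs_nonneg ((A*B).trace), norm_nonneg A, norm_nonneg B,
    mul_nonneg (norm_nonneg A) (norm_nonneg B), sq_abs ((A*B).trace)]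

/-- The bilinear form `(X, Y) ↦ tr(S Xᵀ D Y)`. -/
noncomputable def Bl {m n : ℕ} (D : Matrix (Fin m) (Fin m) ℝ) (S : Matrix (Fin n) (Fin n) ℝ)
    (X Y : Matrix (Fin m) (Fin n) ℝ) : ℝ :=
  (S * (Xᵀ * D * Y)).trace

section BlLemmas
variable {m n : ℕ} {D : Matrix (Fin m) (Fin m) ℝ} {S : Matrix (Fin n) (Fin n) ℝ}

lemma Bl_symm (hS : Sᵀ = S) (hD : Dᵀ = D) (X Y : Matrix (Fin m) (Fin n) ℝ) :
    Bl D S X Y = Bl D S Y X := by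
  unfold Bl
  rw [← Matrix.trace_transpose (S * (Xᵀ * D * Y))]
  rw [Matrix.transpose_mul, Matrix.transpose_mul, Matrix.transpose_mul]
  rw [Matrix.transpose_transpose, hS, hD, Matrix.trace_mul_comm]
  rw [Matrix.mul_assoc]

lemma Bl_add_left (X Y Z : Matrix (Fin m) (Fin n) ℝ) :
    Bl D S (X + Y) Z = Bl D S X Z + Bl D S Y Z := by
  simp [Bl, Matrix.transpose_add, Matrix.add_mul, Matrix.mul_add, Matrix.trace_add]

lemma Bl_smul_left (t : ℝ) (X Z : Matrix (Fin m) (Fin n) ℝ) :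
    Bl D S (t • X) Z = t * Bl D S X Z := by
  simp [Bl, Matrix.transpose_smul, Matrix.smul_mul, Matrix.mul_smul, Matrix.trace_smul]

lemma Bl_add_right (X Y Z : Matrix (Fin m) (Fin n) ℝ) :
    Bl D S X (Y + Z) = Bl D S X Y + Bl D S X Z := by
  simp [Bl, Matrix.mul_add, Matrix.trace_add]

lemma Bl_smul_right (t : ℝ) (X Z : Matrix (Fin m) (Fin n) ℝ) :
    Bl D S X (t • Z) = t * Bl D S X Z := by
  simp [Bl, Matrix.mul_smul, Matrix.trace_smul]

lemma Bl_expand (hS : Sᵀ = S) (hD : Dᵀ = D) (X Y : Matrix (Fin m) (Fin n) ℝ) (t : ℝ) :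
    Bl D S (X + t • Y) (X + t • Y)
      = Bl D S X X + 2 * t * Bl D S X Y + t ^ 2 * Bl D S Y Y := by
  rw [Bl_add_left, Bl_add_right, Bl_add_right, Bl_smul_left, Bl_smul_right, Bl_smul_right,
    Bl_smul_left, Bl_symm hS hD Y X]
  ring

lemma Bl_eq_norm {R : Matrix (Fin m) (Fin m) ℝ} {T : Matrix (Fin n) (Fin n) ℝ}
    (hRR : R * R = D) (hTT : T * T = S) (hR : Rᵀ = R) (hT : Tᵀ = T)
    (X : Matrix (Fin m) (Fin n) ℝ) :
    Bl D S X X = ‖R * X * T‖ ^ 2 := by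
  rw [← traceTransposeMul (R * X * T)]
  rw [Matrix.transpose_mul, Matrix.transpose_mul, hR, hT]
  unfold Bl
  rw [← hRR, ← hTT]
  rw [Matrix.trace_mul_comm (T * T)]
  have e : T * (Xᵀ * R) * (R * X * T) = T * (Xᵀ * (R * (R * (X * T)))) := by
    simp only [Matrix.mul_assoc]
  rw [e, Matrix.trace_mul_comm T]
  simp only [Matrix.mul_assoc]

end BlLemmas

lemma coercive_of_units {m n : ℕ} {R : Matrix (Fin m) (Fin m) ℝ} {T : Matrix (Fin n) (Fin n) ℝ}
    (hR : IsUnit R.det) (hT : IsUnit T.det) (X : Matrix (Fin m) (Fin n) ℝ) :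
    (1 / (‖R⁻¹‖ * ‖T⁻¹‖ + 1) ^ 2) * ‖X‖ ^ 2 ≤ ‖R * X * T‖ ^ 2 := by
  have hX : X = R⁻¹ * (R * X * T) * T⁻¹ := by
    have e1 : R⁻¹ * (R * X * T) * T⁻¹ = R⁻¹ * (R * (X * (T * T⁻¹))) := by
      simp only [Matrix.mul_assoc]
    rw [e1, Matrix.mul_nonsing_inv T hT, Matrix.mul_one, ← Matrix.mul_assoc,
      Matrix.nonsing_inv_mul R hR, Matrix.one_mul]
  have h1 : ‖X‖ ≤ ‖R⁻¹‖ * ‖R * X * T‖ * ‖T⁻¹‖ := by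
    calc ‖X‖ = ‖R⁻¹ * (R * X * T) * T⁻¹‖ := by rw [← hX]
    _ ≤ ‖R⁻¹ * (R * X * T)‖ * ‖T⁻¹‖ := Matrix.frobenius_norm_mul _ _
    _ ≤ ‖R⁻¹‖ * ‖R * X * T‖ * ‖T⁻¹‖ := by
        nlinarith [Matrix.frobenius_norm_mul (R⁻¹) (R * X * T),
          norm_nonneg (T⁻¹ : Matrix (Fin n) (Fin n) ℝ)]
  have ha : (0:ℝ) ≤ ‖R⁻¹‖ := norm_nonneg _
  have hb : (0:ℝ) ≤ ‖T⁻¹‖ := norm_nonneg _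
  have hz : (0:ℝ) ≤ ‖R * X * T‖ := norm_nonneg _
  have hx0 : (0:ℝ) ≤ ‖X‖ := norm_nonneg _
  have hd : (0:ℝ) < (‖R⁻¹‖ * ‖T⁻¹‖ + 1) ^ 2 := by positivity
  rw [div_mul_eq_mul_div, one_mul, div_le_iff₀ hd]
  nlinarith [sq_nonneg ‖X‖, mul_nonneg ha hb, sq_nonneg (‖R⁻¹‖ * ‖T⁻¹‖)]

open Filter in
lemma exists_min_on_submodule {E : Type*} [NormedAddCommGroup E] [NormedSpace ℝ E]
    [FiniteDimensional ℝ E] (L : Submodule ℝ E) (K₀ : E) (φ : E → ℝ) (hφ : Continuous φ)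
    (c : ℝ) (hc : 0 < c) (hco : ∀ K, c * ‖K - K₀‖ ^ 2 ≤ φ K) :
    ∃ Ks ∈ L, ∀ K ∈ L, φ Ks ≤ φ K := by
  have : Nonempty ↥L := ⟨0⟩
  have hψ : Continuous fun k : ↥L => φ (k : E) := hφ.comp continuous_subtype_val
  have t0 : Tendsto (fun k : ↥L => ‖(k : E)‖) (cocompact ↥L) atTop :=
    tendsto_norm_cocompact_atTop (E := ↥L)
  have t1 : Tendsto (fun k : ↥L => ‖(k : E) - K₀‖) (cocompact ↥L) atTop := by
    apply tendsto_atTop_mono (fun k => ?_) (tendsto_atTop_add_const_right _ (-‖K₀‖) t0)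
    have := norm_sub_norm_le (k : E) K₀
    linarith
  have t2 : Tendsto (fun r : ℝ => c * r ^ 2) atTop atTop :=
    (tendsto_pow_atTop two_ne_zero).const_mul_atTop hc
  have t3 : Tendsto (fun k : ↥L => φ (k : E)) (cocompact ↥L) atTop :=
    tendsto_atTop_mono (fun k => hco (k : E)) (t2.comp t1)
  obtain ⟨ks, hks⟩ := hψ.exists_forall_le t3
  exact ⟨ks, ks.2, fun K hK => hks ⟨K, hK⟩⟩

lemma bzero {a b : ℝ} (ha : 0 ≤ a) (h : ∀ t : ℝ, 0 ≤ 2 * t * b + t ^ 2 * a) : b = 0 := by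
  have hpos : (0:ℝ) < a + 1 := by linarith
  have h1 := h (-b / (a + 1))
  have e : 2 * (-b / (a + 1)) * b + (-b / (a + 1)) ^ 2 * a
      = -(b ^ 2 * (a + 2)) / (a + 1) ^ 2 := by
    field_simp
    ring
  rw [e, le_div_iff₀ (by positivity)] at h1
  nlinarith [sq_nonneg b]

lemma mat_diff_identity {m n : ℕ} (D : Matrix (Fin m) (Fin m) ℝ)
    (X Y : Matrix (Fin m) (Fin n) ℝ) :
    Xᵀ * D * X - Yᵀ * D * Y = (X - Y)ᵀ * D * X + Yᵀ * D * (X - Y) := by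
  simp only [Matrix.transpose_sub, Matrix.sub_mul, Matrix.mul_sub]
  abel

open scoped MatrixOrder in
set_option maxHeartbeats 2000000 in
/-- At any `(Λ̄₁,Λ̄₂) ∈ S₊ⁿ × S₊ⁿ` with `Λ̄₁+Λ̄₂ ≻ 0`, the dual
function `g(Λ₁,Λ₂) = inf_{K∈L} tr((Λ₁+Λ₂)C(K))` is Fréchet differentiable, with
derivative `(A₁,A₂) ↦ tr(C(K⋆)(A₁+A₂))`, where `K⋆` is the unique minimizer of
`K ↦ tr((Λ̄₁+Λ̄₂)C(K))` over `L`. -/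
theorem stmt13 {m n : ℕ} (L : Submodule ℝ (Matrix (Fin m) (Fin n) ℝ))
    (D : Matrix (Fin m) (Fin m) ℝ) (hD : D.PosDef) (Kor : Matrix (Fin m) (Fin n) ℝ)
    (Cmap : Matrix (Fin m) (Fin n) ℝ → Matrix (Fin n) (Fin n) ℝ)
    (hCmap : ∀ K, Cmap K = (K - Kor)ᵀ * D * (K - Kor))
    (g : Matrix (Fin n) (Fin n) ℝ × Matrix (Fin n) (Fin n) ℝ → ℝ)
    (hg : ∀ Λ, g Λ = sInf {c : ℝ | ∃ K ∈ L, c = ((Λ.1 + Λ.2) * Cmap K).trace})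
    (Λb₁ Λb₂ : Matrix (Fin n) (Fin n) ℝ) (hΛb₁ : Λb₁.PosSemidef) (hΛb₂ : Λb₂.PosSemidef)
    (hpd : (Λb₁ + Λb₂).PosDef) :
    ∃ Kstar ∈ L,
      (∀ K ∈ L, ((Λb₁ + Λb₂) * Cmap Kstar).trace ≤ ((Λb₁ + Λb₂) * Cmap K).trace) ∧
      (∀ K ∈ L, ((Λb₁ + Λb₂) * Cmap K).trace = ((Λb₁ + Λb₂) * Cmap Kstar).trace →
        K = Kstar) ∧
      HasFDerivAt g (traceCLM (Cmap Kstar)) (Λb₁, Λb₂) := by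
  classical
  set Sb : Matrix (Fin n) (Fin n) ℝ := Λb₁ + Λb₂ with hSb
  set f : Matrix (Fin n) (Fin n) ℝ → Matrix (Fin m) (Fin n) ℝ → ℝ :=
    fun S K => (S * Cmap K).trace with hf
  have hfB : ∀ S K, f S K = Bl D S (K - Kor) (K - Kor) := by
    intro S K
    rw [hf]
    simp only
    rw [hCmap]
    rfl
  have hDt : Dᵀ = D := by
    rw [← Matrix.conjTranspose_eq_transpose_of_trivial]; exact hD.1
  have hSt : Sbᵀ = Sb := by
    rw [← Matrix.conjTranspose_eq_transpose_of_trivial]; exact hpd.1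
  -- square roots
  set R := CFC.sqrt D with hRdef
  set T := CFC.sqrt Sb with hTdef
  have hRR : R * R = D := CFC.sqrt_mul_sqrt_self D hD.posSemidef.nonneg
  have hTT : T * T = Sb := CFC.sqrt_mul_sqrt_self Sb hpd.posSemidef.nonneg
  have hRt : Rᵀ = R := by
    rw [← Matrix.conjTranspose_eq_transpose_of_trivial]; exact (CFC.sqrt_nonneg D).posSemidef.1
  have hTt : Tᵀ = T := by
    rw [← Matrix.conjTranspose_eq_transpose_of_trivial]; exact (CFC.sqrt_nonneg Sb).posSemidef.1
  have hRdet : IsUnit R.det := by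
    have h1 : R.det * R.det = D.det := by rw [← Matrix.det_mul, hRR]
    have h2 : D.det ≠ 0 := ne_of_gt hD.det_pos
    exact isUnit_iff_ne_zero.mpr (fun h => h2 (by rw [← h1, h, mul_zero]))
  have hTdet : IsUnit T.det := by
    have h1 : T.det * T.det = Sb.det := by rw [← Matrix.det_mul, hTT]
    have h2 : Sb.det ≠ 0 := ne_of_gt hpd.det_pos
    exact isUnit_iff_ne_zero.mpr (fun h => h2 (by rw [← h1, h, mul_zero]))
  set c : ℝ := 1 / (‖R⁻¹‖ * ‖T⁻¹‖ + 1) ^ 2 with hcdef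
  have hcpos : 0 < c := by positivity
  have hcoB : ∀ X, c * ‖X‖ ^ 2 ≤ Bl D Sb X X := by
    intro X
    rw [Bl_eq_norm hRR hTT hRt hTt X]
    exact coercive_of_units hRdet hTdet X
  have hBnn : ∀ X, 0 ≤ Bl D Sb X X := fun X => le_trans (by positivity) (hcoB X)
  -- norm bound on Cmap
  have hCb : ∀ K, ‖Cmap K‖ ≤ ‖D‖ * ‖K - Kor‖ ^ 2 := by
    intro K
    rw [hCmap]
    calc ‖(K - Kor)ᵀ * D * (K - Kor)‖
        ≤ ‖(K - Kor)ᵀ * D‖ * ‖K - Kor‖ := Matrix.frobenius_norm_mul _ _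
      _ ≤ ‖D‖ * ‖K - Kor‖ ^ 2 := by
          have h1 := Matrix.frobenius_norm_mul (K - Kor)ᵀ D
          rw [Matrix.frobenius_norm_transpose] at h1
          nlinarith [norm_nonneg (K - Kor), norm_nonneg D]
  have htr : ∀ (P : Matrix (Fin n) (Fin n) ℝ) (K), |(P * Cmap K).trace| ≤ ‖P‖ * (‖D‖ * ‖K - Kor‖ ^ 2) :=
    fun P K => le_trans (traceCS _ _) (mul_le_mul_of_nonneg_left (hCb K) (norm_nonneg P))
  have hsplit : ∀ (S' : Matrix (Fin n) (Fin n) ℝ) K,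
      f S' K = f Sb K + ((S' - Sb) * Cmap K).trace := by
    intro S' K
    simp only [hf, Matrix.sub_mul, Matrix.trace_sub]
    ring
  set δ : ℝ := c / (2 * (‖D‖ + 1)) with hδdef
  have hδpos : 0 < δ := by rw [hδdef]; exact div_pos hcpos (by positivity)
  have hδD : δ * ‖D‖ ≤ c / 2 := by
    rw [hδdef, div_mul_eq_mul_div, div_le_div_iff₀ (by positivity) (by norm_num)]
    nlinarith [norm_nonneg D, hcpos.le]
  have hunif : ∀ S' : Matrix (Fin n) (Fin n) ℝ, ‖S' - Sb‖ ≤ δ →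
      ∀ K, (c / 2) * ‖K - Kor‖ ^ 2 ≤ f S' K := by
    intro S' hS' K
    have h1 : c * ‖K - Kor‖ ^ 2 ≤ f Sb K := by rw [hfB]; exact hcoB _
    have h2 := htr (S' - Sb) K
    have h3 : ‖S' - Sb‖ * (‖D‖ * ‖K - Kor‖ ^ 2) ≤ δ * ‖D‖ * ‖K - Kor‖ ^ 2 := by
      have : ‖S' - Sb‖ * (‖D‖ * ‖K - Kor‖ ^ 2) ≤ δ * (‖D‖ * ‖K - Kor‖ ^ 2) :=
        mul_le_mul_of_nonneg_right hS' (by positivity)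
      linarith [this]
    have h4 : δ * ‖D‖ * ‖K - Kor‖ ^ 2 ≤ (c / 2) * ‖K - Kor‖ ^ 2 :=
      mul_le_mul_of_nonneg_right hδD (by positivity)
    have h5 := hsplit S' K
    have h6 : ((S' - Sb) * Cmap K).trace ≥ -(δ * ‖D‖ * ‖K - Kor‖ ^ 2) := by
      have := neg_abs_le ((S' - Sb) * Cmap K).trace
      linarith
    nlinarith [sq_nonneg ‖K - Kor‖]
  have hcont : ∀ S' : Matrix (Fin n) (Fin n) ℝ, Continuous (f S') := by
    intro S'
    have h0 : Continuous (fun K : Matrix (Fin m) (Fin n) ℝ => K - Kor) :=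
      continuous_id.sub continuous_const
    have : Continuous (fun K : Matrix (Fin m) (Fin n) ℝ =>
        (S' * ((K - Kor)ᵀ * D * (K - Kor))).trace) :=
      ((continuous_const.matrix_mul (((h0.matrix_transpose).matrix_mul
        continuous_const).matrix_mul h0))).matrix_trace
    have e : f S' = fun K : Matrix (Fin m) (Fin n) ℝ =>
        (S' * ((K - Kor)ᵀ * D * (K - Kor))).trace := by
      funext K; rw [hf]; simp only; rw [hCmap]
    rw [e]
    exact this
  have hex : ∀ S' : Matrix (Fin n) (Fin n) ℝ, ‖S' - Sb‖ ≤ δ →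
      ∃ Ks ∈ L, ∀ K ∈ L, f S' Ks ≤ f S' K :=
    fun S' hS' => exists_min_on_submodule L Kor (f S') (hcont S') (c / 2)
      (half_pos hcpos) (hunif S' hS')
  obtain ⟨Ks, hKsL, hKsmin⟩ := hex Sb (by simp [hδpos.le])
  -- strong convexity at Sb
  have hstrong : ∀ K ∈ L, f Sb Ks + c * ‖K - Ks‖ ^ 2 ≤ f Sb K := by
    intro K hK
    set d := K - Ks with hddef
    have hdL : d ∈ L := L.sub_mem hK hKsL
    have hexp : ∀ t : ℝ, f Sb (Ks + t • d)
        = f Sb Ks + 2 * t * Bl D Sb (Ks - Kor) d + t ^ 2 * Bl D Sb d d := by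
      intro t
      rw [hfB, hfB]
      have e : Ks + t • d - Kor = (Ks - Kor) + t • d := by abel
      rw [e, Bl_expand hSt hDt]
    have hb0 : Bl D Sb (Ks - Kor) d = 0 := by
      apply bzero (hBnn d)
      intro t
      have h := hKsmin (Ks + t • d) (L.add_mem hKsL (L.smul_mem t hdL))
      rw [hexp t] at h
      linarith
    have hKd : K = Ks + (1:ℝ) • d := by rw [hddef]; simp
    have := hexp 1
    rw [hb0] at this
    rw [hKd]
    rw [this]
    have := hcoB d
    have hnorm : ‖K - Ks‖ = ‖d‖ := by rw [hddef]
    rw [hnorm]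
    linarith [hcoB d]
  refine ⟨Ks, hKsL, ?_, ?_, ?_⟩
  · intro K hK
    exact hKsmin K hK
  · intro K hK heq
    have h1 := hstrong K hK
    have h2 : c * ‖K - Ks‖ ^ 2 ≤ 0 := by
      have e1 : f Sb K = ((Λb₁ + Λb₂) * Cmap K).trace := rfl
      have e2 : f Sb Ks = ((Λb₁ + Λb₂) * Cmap Ks).trace := rfl
      rw [e1, e2, heq] at h1
      linarith
    have h2' : c * ‖K - Ks‖ ^ 2 ≤ c * 0 := by rwa [mul_zero]
    have h3 : ‖K - Ks‖ ^ 2 ≤ 0 := le_of_mul_le_mul_left h2' hcpos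
    have h4 : ‖K - Ks‖ ^ 2 = 0 := le_antisymm h3 (sq_nonneg _)
    have h5 : ‖K - Ks‖ = 0 := by
      have := (pow_eq_zero_iff (two_ne_zero)).mp h4
      exact this
    exact sub_eq_zero.mp (norm_eq_zero.mp h5)
  -- differentiability
  · have hgval : ∀ (Λ : Matrix (Fin n) (Fin n) ℝ × Matrix (Fin n) (Fin n) ℝ)
        (Ks' : Matrix (Fin m) (Fin n) ℝ), Ks' ∈ L →
        (∀ K ∈ L, f (Λ.1 + Λ.2) Ks' ≤ f (Λ.1 + Λ.2) K) → g Λ = f (Λ.1 + Λ.2) Ks' := by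
      intro Λ Ks' hmem hmin
      rw [hg]
      refine le_antisymm (csInf_le ?_ ?_) (le_csInf ⟨_, Ks', hmem, rfl⟩ ?_)
      · refine ⟨f (Λ.1 + Λ.2) Ks', ?_⟩
        rintro x ⟨K, hK, rfl⟩
        exact hmin K hK
      · exact ⟨Ks', hmem, rfl⟩
      · rintro x ⟨K, hK, rfl⟩
        exact hmin K hK
    have hgb : g (Λb₁, Λb₂) = f Sb Ks := hgval (Λb₁, Λb₂) Ks hKsL hKsmin
    set u₀ : ℝ := ‖Ks - Kor‖ with hu₀
    set B₀ : ℝ := f Sb Ks + δ * (‖D‖ * u₀ ^ 2) with hB₀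
    have hfKs0 : 0 ≤ f Sb Ks := by rw [hfB]; exact hBnn _
    have hB₀nn : 0 ≤ B₀ :=
      add_nonneg hfKs0 (mul_nonneg hδpos.le (mul_nonneg (norm_nonneg D) (sq_nonneg _)))
    set r : ℝ := Real.sqrt (B₀ / (c / 2)) with hrdef
    have hrnn : 0 ≤ r := Real.sqrt_nonneg _
    have hr2 : r ^ 2 = B₀ / (c / 2) :=
      Real.sq_sqrt (div_nonneg hB₀nn (by linarith))
    set P : ℝ := ‖D‖ * (u₀ ^ 2 + r ^ 2) / c with hPdef
    have hPnn : 0 ≤ P :=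
      div_nonneg (mul_nonneg (norm_nonneg D) (add_nonneg (sq_nonneg u₀) (sq_nonneg r))) hcpos.le
    set M : ℝ := (‖D‖ * (r + u₀)) * Real.sqrt P with hMdef
    have hMnn : 0 ≤ M :=
      mul_nonneg (mul_nonneg (norm_nonneg D) (by linarith [norm_nonneg (Ks - Kor)]))
        (Real.sqrt_nonneg _)
    -- the key estimate
    have hkey : ∀ Λ : Matrix (Fin n) (Fin n) ℝ × Matrix (Fin n) (Fin n) ℝ,
        ‖(Λ.1 + Λ.2) - Sb‖ ≤ δ →
        |g Λ - g (Λb₁, Λb₂) - (((Λ.1 + Λ.2) - Sb) * Cmap Ks).trace|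
          ≤ M * (‖(Λ.1 + Λ.2) - Sb‖ * Real.sqrt ‖(Λ.1 + Λ.2) - Sb‖) := by
      intro Λ hΛ
      set S' : Matrix (Fin n) (Fin n) ℝ := Λ.1 + Λ.2 with hS'def
      set Δ : Matrix (Fin n) (Fin n) ℝ := S' - Sb with hΔdef
      obtain ⟨K', hK'L, hK'min⟩ := hex S' hΛ
      have hgΛ : g Λ = f S' K' := hgval Λ K' hK'L hK'min
      have hΔnn : (0:ℝ) ≤ ‖Δ‖ := norm_nonneg _
      -- upper bound for f S' K'
      have hup : f S' K' ≤ f Sb Ks + (Δ * Cmap Ks).trace := by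
        have := hK'min Ks hKsL
        rw [hsplit S' Ks] at this
        exact this
      have htrKs := htr Δ Ks
      have hfK'B : f S' K' ≤ B₀ := by
        have h2 : (Δ * Cmap Ks).trace ≤ δ * (‖D‖ * u₀ ^ 2) := by
          have := le_abs_self (Δ * Cmap Ks).trace
          have h3 : ‖Δ‖ * (‖D‖ * u₀ ^ 2) ≤ δ * (‖D‖ * u₀ ^ 2) :=
            mul_le_mul_of_nonneg_right hΛ (by positivity)
          calc (Δ * Cmap Ks).trace ≤ |(Δ * Cmap Ks).trace| := le_abs_self _
            _ ≤ ‖Δ‖ * (‖D‖ * u₀ ^ 2) := htrKs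
            _ ≤ δ * (‖D‖ * u₀ ^ 2) := h3
        rw [hB₀]; linarith
      set u : ℝ := ‖K' - Kor‖ with hu
      have hunn : 0 ≤ u := norm_nonneg _
      have hu2r2 : u ^ 2 ≤ r ^ 2 := by
        have h1 := hunif S' hΛ K'
        rw [hr2, le_div_iff₀ (half_pos hcpos)]
        linarith [hfK'B]
      have hur : u ≤ r := by nlinarith
      -- strong convexity bound on w = ‖K' - Ks‖
      set w : ℝ := ‖K' - Ks‖ with hw
      have hwnn : 0 ≤ w := norm_nonneg _
      have hw2 : c * w ^ 2 ≤ (Δ * Cmap Ks).trace - (Δ * Cmap K').trace := by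
        have h1 := hstrong K' hK'L
        have h2 := hsplit S' K'
        -- f Sb K' = f S' K' - tr(Δ C K') ≤ f Sb Ks + tr(Δ C Ks) - tr(Δ C K')
        linarith
      have htrK' := htr Δ K'
      have hwP : w ^ 2 ≤ ‖Δ‖ * P := by
        have h1 : (Δ * Cmap Ks).trace - (Δ * Cmap K').trace
            ≤ ‖Δ‖ * (‖D‖ * u₀ ^ 2) + ‖Δ‖ * (‖D‖ * u ^ 2) := by
          have a1 := le_abs_self (Δ * Cmap Ks).trace
          have a2 := neg_abs_le (Δ * Cmap K').trace
          linarith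
        have e : c * P = ‖D‖ * (u₀ ^ 2 + r ^ 2) := by
          rw [hPdef, mul_comm, div_mul_cancel₀ _ hcpos.ne']
        have h2 : ‖Δ‖ * (‖D‖ * u₀ ^ 2) + ‖Δ‖ * (‖D‖ * u ^ 2) ≤ ‖Δ‖ * (c * P) := by
          rw [e]
          have hh : (0:ℝ) ≤ ‖Δ‖ * ‖D‖ * (r ^ 2 - u ^ 2) :=
            mul_nonneg (mul_nonneg hΔnn (norm_nonneg D)) (by linarith)
          nlinarith [hh]
        have h3 : c * w ^ 2 ≤ c * (‖Δ‖ * P) := by nlinarith [le_trans (le_trans hw2 h1) h2]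
        exact le_of_mul_le_mul_left h3 hcpos
      have hwle : w ≤ Real.sqrt ‖Δ‖ * Real.sqrt P := by
        rw [← Real.sqrt_mul hΔnn]
        exact (Real.le_sqrt hwnn (mul_nonneg hΔnn hPnn)).mpr hwP
      -- Lipschitz bound on Cmap
      have hCdiff : Cmap K' - Cmap Ks
          = (K' - Ks)ᵀ * D * (K' - Kor) + (Ks - Kor)ᵀ * D * (K' - Ks) := by
        rw [hCmap, hCmap]
        have e : K' - Kor - (Ks - Kor) = K' - Ks := by abel
        rw [← e]
        exact mat_diff_identity D (K' - Kor) (Ks - Kor)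
      have hCL : ‖Cmap K' - Cmap Ks‖ ≤ ‖D‖ * (u + u₀) * w := by
        rw [hCdiff]
        have b1 : ‖(K' - Ks)ᵀ * D * (K' - Kor)‖ ≤ w * ‖D‖ * u := by
          calc ‖(K' - Ks)ᵀ * D * (K' - Kor)‖
              ≤ ‖(K' - Ks)ᵀ * D‖ * ‖K' - Kor‖ := Matrix.frobenius_norm_mul _ _
            _ ≤ (w * ‖D‖) * u := by
                have h1 := Matrix.frobenius_norm_mul (K' - Ks)ᵀ D
                rw [Matrix.frobenius_norm_transpose] at h1
                exact mul_le_mul_of_nonneg_right h1 (norm_nonneg _)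
            _ = w * ‖D‖ * u := by ring
        have b2 : ‖(Ks - Kor)ᵀ * D * (K' - Ks)‖ ≤ u₀ * ‖D‖ * w := by
          calc ‖(Ks - Kor)ᵀ * D * (K' - Ks)‖
              ≤ ‖(Ks - Kor)ᵀ * D‖ * ‖K' - Ks‖ := Matrix.frobenius_norm_mul _ _
            _ ≤ (u₀ * ‖D‖) * w := by
                have h1 := Matrix.frobenius_norm_mul (Ks - Kor)ᵀ D
                rw [Matrix.frobenius_norm_transpose] at h1
                exact mul_le_mul_of_nonneg_right h1 (norm_nonneg _)
            _ = u₀ * ‖D‖ * w := by ring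
        calc ‖(K' - Ks)ᵀ * D * (K' - Kor) + (Ks - Kor)ᵀ * D * (K' - Ks)‖
            ≤ ‖(K' - Ks)ᵀ * D * (K' - Kor)‖ + ‖(Ks - Kor)ᵀ * D * (K' - Ks)‖ := norm_add_le _ _
          _ ≤ ‖D‖ * (u + u₀) * w := by
              have e : ‖D‖ * (u + u₀) * w = w * ‖D‖ * u + u₀ * ‖D‖ * w := by ring
              rw [e]; linarith [b1, b2]
      -- error bounds
      have hlow : g Λ - g (Λb₁, Λb₂) - (Δ * Cmap Ks).trace
          ≥ (Δ * (Cmap K' - Cmap Ks)).trace := by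
        rw [hgΛ, hgb]
        have h1 := hstrong K' hK'L
        have h2 := hsplit S' K'
        have e : (Δ * (Cmap K' - Cmap Ks)).trace
            = (Δ * Cmap K').trace - (Δ * Cmap Ks).trace := by
          rw [Matrix.mul_sub, Matrix.trace_sub]
        rw [e]
        nlinarith [sq_nonneg ‖K' - Ks‖, hcpos.le, mul_nonneg hcpos.le (sq_nonneg ‖K' - Ks‖)]
      have hhigh : g Λ - g (Λb₁, Λb₂) - (Δ * Cmap Ks).trace ≤ 0 := by
        rw [hgΛ, hgb]
        linarith
      have habs : |g Λ - g (Λb₁, Λb₂) - (Δ * Cmap Ks).trace|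
          ≤ ‖Δ‖ * ‖Cmap K' - Cmap Ks‖ := by
        have h1 := traceCS Δ (Cmap K' - Cmap Ks)
        have h2 := neg_abs_le (Δ * (Cmap K' - Cmap Ks)).trace
        rw [abs_le]
        constructor
        · linarith
        · linarith [mul_nonneg hΔnn (norm_nonneg (Cmap K' - Cmap Ks))]
      calc |g Λ - g (Λb₁, Λb₂) - (Δ * Cmap Ks).trace|
          ≤ ‖Δ‖ * ‖Cmap K' - Cmap Ks‖ := habs
        _ ≤ ‖Δ‖ * (‖D‖ * (u + u₀) * w) :=
            mul_le_mul_of_nonneg_left hCL hΔnn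
        _ ≤ ‖Δ‖ * (‖D‖ * (r + u₀) * (Real.sqrt ‖Δ‖ * Real.sqrt P)) := by
            apply mul_le_mul_of_nonneg_left _ hΔnn
            apply mul_le_mul
            · apply mul_le_mul_of_nonneg_left _ (norm_nonneg D)
              linarith
            · exact hwle
            · exact hwnn
            · positivity
        _ = M * (‖Δ‖ * Real.sqrt ‖Δ‖) := by rw [hMdef]; ring
    -- conclude differentiability
    refine hasFDerivAt_iff_isLittleO.mpr ?_
    rw [Asymptotics.isLittleO_iff]
    intro ε hε
    set η : ℝ := min (δ / 2) ((ε / (2 * M + 1)) ^ 2 / 2) with hηdef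
    have hMpos : (0:ℝ) < 2 * M + 1 := by linarith
    have hηpos : 0 < η :=
      lt_min (half_pos hδpos) (half_pos (pow_pos (div_pos hε hMpos) 2))
    filter_upwards [Metric.ball_mem_nhds (Λb₁, Λb₂) hηpos] with Λ hΛball
    have hdist : ‖Λ - (Λb₁, Λb₂)‖ < η := by
      rwa [Metric.mem_ball, dist_eq_norm] at hΛball
    set Δ : Matrix (Fin n) (Fin n) ℝ := (Λ.1 + Λ.2) - Sb with hΔdef
    have hΔsplit : Δ = (Λ - (Λb₁, Λb₂)).1 + (Λ - (Λb₁, Λb₂)).2 := by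
      show Λ.1 + Λ.2 - (Λb₁ + Λb₂) = (Λ.1 - Λb₁) + (Λ.2 - Λb₂)
      abel
    have hΔ2 : ‖Δ‖ ≤ 2 * ‖Λ - (Λb₁, Λb₂)‖ := by
      rw [hΔsplit]
      calc ‖(Λ - (Λb₁, Λb₂)).1 + (Λ - (Λb₁, Λb₂)).2‖
          ≤ ‖(Λ - (Λb₁, Λb₂)).1‖ + ‖(Λ - (Λb₁, Λb₂)).2‖ := norm_add_le _ _
        _ ≤ 2 * ‖Λ - (Λb₁, Λb₂)‖ := by
            have h1 := norm_fst_le (Λ - (Λb₁, Λb₂))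
            have h2 := norm_snd_le (Λ - (Λb₁, Λb₂))
            linarith
    have hΔδ : ‖Δ‖ ≤ δ := by
      have h1 : η ≤ δ / 2 := min_le_left _ _
      linarith
    have hk := hkey Λ hΔδ
    have hsqrt : Real.sqrt ‖Δ‖ ≤ ε / (2 * M + 1) := by
      have h1 : ‖Δ‖ ≤ (ε / (2 * M + 1)) ^ 2 := by
        have h2 : η ≤ (ε / (2 * M + 1)) ^ 2 / 2 := min_le_right _ _
        linarith
      calc Real.sqrt ‖Δ‖ ≤ Real.sqrt ((ε / (2 * M + 1)) ^ 2) := Real.sqrt_le_sqrt h1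
        _ = ε / (2 * M + 1) := Real.sqrt_sq (div_nonneg hε.le hMpos.le)
    -- rewrite the linear map application
    have hCLM : (traceCLM (Cmap Ks)) (Λ - (Λb₁, Λb₂)) = (Δ * Cmap Ks).trace := by
      have e1 : (traceCLM (Cmap Ks)) (Λ - (Λb₁, Λb₂))
          = (Cmap Ks * ((Λ - (Λb₁, Λb₂)).1 + (Λ - (Λb₁, Λb₂)).2)).trace := rfl
      rw [e1, ← hΔsplit, Matrix.trace_mul_comm]
    erw [hCLM]
    rw [Real.norm_eq_abs]
    have hq : (0:ℝ) ≤ ε / (2 * M + 1) := div_nonneg hε.le hMpos.le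
    have hΔnn : (0:ℝ) ≤ ‖Δ‖ := norm_nonneg _
    have hxnn : (0:ℝ) ≤ ‖Λ - (Λb₁, Λb₂)‖ := norm_nonneg _
    have e1 : M * (‖Δ‖ * Real.sqrt ‖Δ‖) ≤ M * (‖Δ‖ * (ε / (2 * M + 1))) :=
      mul_le_mul_of_nonneg_left (mul_le_mul_of_nonneg_left hsqrt hΔnn) hMnn
    have e2 : M * (‖Δ‖ * (ε / (2 * M + 1))) ≤ M * ((2 * ‖Λ - (Λb₁, Λb₂)‖) * (ε / (2 * M + 1))) :=
      mul_le_mul_of_nonneg_left (mul_le_mul_of_nonneg_right hΔ2 hq) hMnn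
    have hqe : (2 * M + 1) * (ε / (2 * M + 1)) = ε := by
      field_simp
    have e3 : M * ((2 * ‖Λ - (Λb₁, Λb₂)‖) * (ε / (2 * M + 1))) ≤ ε * ‖Λ - (Λb₁, Λb₂)‖ := by
      have h1 : M * ((2 * ‖Λ - (Λb₁, Λb₂)‖) * (ε / (2 * M + 1)))
          = (2 * M) * (ε / (2 * M + 1)) * ‖Λ - (Λb₁, Λb₂)‖ := by ring
      have h2 : (2 * M) * (ε / (2 * M + 1)) ≤ (2 * M + 1) * (ε / (2 * M + 1)) := by
        nlinarith
      rw [h1, hqe] at *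
      nlinarith
    linarith [hk]
end

section
/- Let p ∈ [1,∞], r ≥ 0, and let X ∈ Sⁿ have eigendecomposition X = U·diag(λ)·Uᵀ with U an n×n orthogonal matrix and λ ∈ ℝⁿ the vector of eigenvalues. Let S_r^p := {Y ∈ Sⁿ : ‖Y‖_p ≤ r} and B_r^p := {x ∈ ℝⁿ : ‖x‖_p ≤ r}. Then the orthogonal projection of X onto S_r^p with respect to the Frobenius inner product satisfies Π_{S_r^p}(X) = U·diag(Π_{B_r^p}(λ))·Uᵀ, where Π_{B_r^p}(λ) is the Euclidean projection of λ onto B_r^p. -/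
open Matrix
open scoped ENNReal

noncomputable def frobNorm {n m : ℕ} (A : Matrix (Fin m) (Fin n) ℝ) : ℝ :=
  Real.sqrt ((Aᵀ * A).trace)

/-- The ℓ_p norm of a vector in ℝⁿ, for `p ∈ [1,∞]`. -/
noncomputable def lpNorm {n : ℕ} (p : ℝ≥0∞) (x : Fin n → ℝ) : ℝ :=
  if p = ⊤ then ⨆ i, |x i| else (∑ i, |x i| ^ p.toReal) ^ (1 / p.toReal)

section Aux

open Polynomial Finset

lemma charpoly_orth_conj {n : ℕ} (U A : Matrix (Fin n) (Fin n) ℝ)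
    (hU : U * Uᵀ = 1) : (U * A * Uᵀ).charpoly = A.charpoly := by
  have hdet : U.det * Uᵀ.det = 1 := by rw [← det_mul, hU, det_one]
  have hcomm := (Matrix.scalar_commute (n := Fin n) (X : ℝ[X]) (fun r => Commute.all _ _)
    ((C : ℝ →+* ℝ[X]).mapMatrix U)).eq
  have hmap : charmatrix (U * A * Uᵀ) =
      (C : ℝ →+* ℝ[X]).mapMatrix U * charmatrix A * (C : ℝ →+* ℝ[X]).mapMatrix Uᵀ := by
    rw [charmatrix, charmatrix, mul_sub, sub_mul]
    congr 1
    · rw [← hcomm, mul_assoc, ← _root_.map_mul, hU, _root_.map_one, mul_one]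
    · rw [← _root_.map_mul, ← _root_.map_mul]
  rw [Matrix.charpoly, Matrix.charpoly, hmap, det_mul, det_mul,
    ← RingHom.map_det, ← RingHom.map_det, mul_comm (C U.det * A.charmatrix.det) (C Uᵀ.det),
    ← mul_assoc, ← _root_.map_mul, mul_comm Uᵀ.det U.det, hdet, _root_.map_one, one_mul]

lemma charpoly_diagonal' {n : ℕ} (d : Fin n → ℝ) :
    (Matrix.diagonal d).charpoly = ∏ i, (X - C (d i)) := by
  have h : charmatrix (Matrix.diagonal d) = Matrix.diagonal (fun i => X - C (d i)) := by
    ext i j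
    by_cases hij : i = j
    · subst hij; simp [charmatrix_apply_eq]
    · simp [charmatrix_apply_ne _ _ _ hij, Matrix.diagonal_apply_ne _ hij]
  rw [Matrix.charpoly, h, det_diagonal]

lemma roots_prod_lin {n : ℕ} (f : Fin n → ℝ) :
    (∏ i, (X - C (f i))).roots = Finset.univ.val.map f := by
  have : (∏ i, (X - C (f i))) = ((Finset.univ.val.map f).map fun a => X - C a).prod := by
    rw [Multiset.map_map]; rfl
  rw [this, Polynomial.roots_multiset_prod_X_sub_C]

lemma roots_charpoly_hermitian {n : ℕ} {A : Matrix (Fin n) (Fin n) ℝ} (hA : A.IsHermitian) :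
    A.charpoly.roots = Finset.univ.val.map hA.eigenvalues := by
  set V : Matrix (Fin n) (Fin n) ℝ := (hA.eigenvectorUnitary : Matrix (Fin n) (Fin n) ℝ) with hV
  have hVmem := hA.eigenvectorUnitary.2
  have hVU : V * Vᵀ = 1 := by
    have := hVmem.2
    rwa [Matrix.star_eq_conjTranspose, Matrix.conjTranspose_eq_transpose_of_trivial] at this
  have hspec : A = V * Matrix.diagonal hA.eigenvalues * Vᵀ := by
    have := hA.spectral_theorem
    rw [Unitary.conjStarAlgAut_apply, Matrix.star_eq_conjTranspose, Matrix.conjTranspose_eq_transpose_of_trivial] at this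
    exact this
  conv_lhs => rw [hspec]
  rw [charpoly_orth_conj _ _ hVU, charpoly_diagonal', roots_prod_lin]

lemma eig_multiset_of_conj {n : ℕ} {A U : Matrix (Fin n) (Fin n) ℝ} {d : Fin n → ℝ}
    (hA : A.IsHermitian) (hU : U * Uᵀ = 1) (hAeq : A = U * Matrix.diagonal d * Uᵀ) :
    Finset.univ.val.map hA.eigenvalues = Finset.univ.val.map d := by
  rw [← roots_charpoly_hermitian hA]
  conv_lhs => rw [hAeq]
  rw [charpoly_orth_conj _ _ hU, charpoly_diagonal', roots_prod_lin]

lemma msum_eq {n : ℕ} {f g : Fin n → ℝ} (φ : ℝ → ℝ)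
    (h : Finset.univ.val.map f = Finset.univ.val.map g) :
    ∑ i, φ (f i) = ∑ i, φ (g i) := by
  have h2 : Finset.univ.val.map (φ ∘ f) = Finset.univ.val.map (φ ∘ g) := by
    rw [← Multiset.map_map, ← Multiset.map_map, h]
  calc ∑ i, φ (f i) = (Finset.univ.val.map (φ ∘ f)).sum := rfl
    _ = (Finset.univ.val.map (φ ∘ g)).sum := by rw [h2]
    _ = ∑ i, φ (g i) := rfl

lemma mrange_eq {n : ℕ} {f g : Fin n → ℝ}
    (h : Finset.univ.val.map f = Finset.univ.val.map g) :
    Set.range f = Set.range g := by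
  ext x
  have : x ∈ Finset.univ.val.map f ↔ x ∈ Finset.univ.val.map g := by rw [h]
  simp only [Multiset.mem_map, Finset.mem_val, Finset.mem_univ, true_and] at this
  simpa [Set.mem_range] using this

lemma msup_eq {n : ℕ} {f g : Fin n → ℝ} (φ : ℝ → ℝ)
    (h : Finset.univ.val.map f = Finset.univ.val.map g) :
    ⨆ i, φ (f i) = ⨆ i, φ (g i) := by
  have h2 : Finset.univ.val.map (φ ∘ f) = Finset.univ.val.map (φ ∘ g) := by
    rw [← Multiset.map_map, ← Multiset.map_map, h]
  have := mrange_eq h2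
  rw [iSup, iSup]
  exact congrArg sSup this

lemma singVals_multiset_of_conj {n : ℕ} {U : Matrix (Fin n) (Fin n) ℝ} (d : Fin n → ℝ)
    (hU : U * Uᵀ = 1) (hU' : Uᵀ * U = 1) :
    Finset.univ.val.map (singVals (U * Matrix.diagonal d * Uᵀ)) =
      Finset.univ.val.map (fun i => |d i|) := by
  set A := U * Matrix.diagonal d * Uᵀ with hA
  have hAt : Aᵀ = A := by
    rw [hA, Matrix.transpose_mul, Matrix.transpose_mul, Matrix.transpose_transpose,
      Matrix.diagonal_transpose, Matrix.mul_assoc]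
  have hAtA : Aᵀ * A = U * Matrix.diagonal (fun i => d i * d i) * Uᵀ := by
    rw [hAt, hA]
    simp only [Matrix.mul_assoc]
    rw [← Matrix.mul_assoc Uᵀ U, hU', Matrix.one_mul,
      ← Matrix.mul_assoc (Matrix.diagonal d) (Matrix.diagonal d), Matrix.diagonal_mul_diagonal]
  have he := eig_multiset_of_conj (Matrix.isHermitian_conjTranspose_mul_self A) hU hAtA
  have h1 : Finset.univ.val.map (singVals A)
      = (Finset.univ.val.map (Matrix.isHermitian_conjTranspose_mul_self A).eigenvalues).map
          Real.sqrt := by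
    rw [Multiset.map_map]; rfl
  rw [h1, he, Multiset.map_map]
  exact Multiset.map_congr rfl (fun i _ => Real.sqrt_mul_self_eq_abs (d i))

lemma schattenNorm_conj_diag {n : ℕ} (p : ℝ≥0∞) {U : Matrix (Fin n) (Fin n) ℝ} (d : Fin n → ℝ)
    (hU : U * Uᵀ = 1) (hU' : Uᵀ * U = 1) :
    schattenNorm p (U * Matrix.diagonal d * Uᵀ) = lpNorm p d := by
  have h := singVals_multiset_of_conj d hU hU'
  unfold schattenNorm lpNorm
  split_ifs
  · exact msup_eq (fun x => x) h
  · rw [msum_eq (fun x => x ^ p.toReal) h]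

lemma schattenNorm_congr {n : ℕ} (p : ℝ≥0∞) {A B : Matrix (Fin n) (Fin n) ℝ}
    (h : Finset.univ.val.map (singVals A) = Finset.univ.val.map (singVals B)) :
    schattenNorm p A = schattenNorm p B := by
  unfold schattenNorm
  split_ifs
  · exact msup_eq (fun x => x) h
  · rw [msum_eq (fun x => x ^ p.toReal) h]

lemma schattenNorm_conj_right {n : ℕ} (p : ℝ≥0∞) (Y U : Matrix (Fin n) (Fin n) ℝ)
    (hU : U * Uᵀ = 1) (hU' : Uᵀ * U = 1) :
    schattenNorm p (Uᵀ * Y * U) = schattenNorm p Y := by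
  apply schattenNorm_congr
  have hG : (Uᵀ * Y * U)ᴴ * (Uᵀ * Y * U) = Uᵀ * (Yᴴ * Y) * Uᵀᵀ := by
    simp only [Matrix.conjTranspose_eq_transpose_of_trivial, Matrix.transpose_mul,
      Matrix.transpose_transpose, Matrix.mul_assoc]
    rw [← Matrix.mul_assoc U Uᵀ, hU, Matrix.one_mul]
  have hUt : Uᵀ * Uᵀᵀ = 1 := by rw [Matrix.transpose_transpose]; exact hU'
  have h1 : Finset.univ.val.map (Matrix.isHermitian_conjTranspose_mul_self (Uᵀ * Y * U)).eigenvalues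
      = Finset.univ.val.map (Matrix.isHermitian_conjTranspose_mul_self Y).eigenvalues := by
    rw [← roots_charpoly_hermitian, ← roots_charpoly_hermitian]
    conv_lhs => rw [hG]
    rw [charpoly_orth_conj _ _ hUt]
  have h2 : Finset.univ.val.map (singVals (Uᵀ * Y * U))
      = (Finset.univ.val.map (Matrix.isHermitian_conjTranspose_mul_self (Uᵀ * Y * U)).eigenvalues).map
        Real.sqrt := by rw [Multiset.map_map]; rfl
  have h3 : Finset.univ.val.map (singVals Y)
      = (Finset.univ.val.map (Matrix.isHermitian_conjTranspose_mul_self Y).eigenvalues).map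
        Real.sqrt := by rw [Multiset.map_map]; rfl
  rw [h2, h3, h1]

lemma lpNorm_diag_le_schattenNorm {n : ℕ} {p : ℝ≥0∞} (hp : 1 ≤ p)
    {Z : Matrix (Fin n) (Fin n) ℝ} (hZ : Z.IsHermitian) :
    lpNorm p (fun i => Z i i) ≤ schattenNorm p Z := by
  set V : Matrix (Fin n) (Fin n) ℝ := (hZ.eigenvectorUnitary : Matrix (Fin n) (Fin n) ℝ) with hVdef
  set μ : Fin n → ℝ := hZ.eigenvalues with hμdef
  have hVmem := hZ.eigenvectorUnitary.2
  have hVU : V * Vᵀ = 1 := by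
    have := hVmem.2
    rwa [Matrix.star_eq_conjTranspose, Matrix.conjTranspose_eq_transpose_of_trivial] at this
  have hVU' : Vᵀ * V = 1 := by
    have := hVmem.1
    rwa [Matrix.star_eq_conjTranspose, Matrix.conjTranspose_eq_transpose_of_trivial] at this
  have hspec : Z = V * Matrix.diagonal μ * Vᵀ := by
    have := hZ.spectral_theorem
    rw [Unitary.conjStarAlgAut_apply, Matrix.star_eq_conjTranspose, Matrix.conjTranspose_eq_transpose_of_trivial] at this
    exact this
  have hS : schattenNorm p Z = lpNorm p μ := by
    conv_lhs => rw [hspec]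
    exact schattenNorm_conj_diag p μ hVU hVU'
  rw [hS]
  set w : Fin n → Fin n → ℝ := fun i j => V i j ^ 2 with hwdef
  have hw0 : ∀ i j, 0 ≤ w i j := fun i j => sq_nonneg _
  have hrow : ∀ i, ∑ j, w i j = 1 := by
    intro i
    have := congrFun (congrFun hVU i) i
    simp only [Matrix.mul_apply, Matrix.one_apply_eq, Matrix.transpose_apply] at this
    rw [← this]
    exact Finset.sum_congr rfl fun j _ => by simp [hwdef, sq]
  have hcol : ∀ j, ∑ i, w i j = 1 := by
    intro j
    have := congrFun (congrFun hVU' j) j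
    simp only [Matrix.mul_apply, Matrix.one_apply_eq, Matrix.transpose_apply] at this
    rw [← this]
    exact Finset.sum_congr rfl fun i _ => by simp [hwdef, sq]
  have hentry : ∀ i, Z i i = ∑ j, w i j * μ j := by
    intro i
    conv_lhs => rw [hspec]
    simp only [Matrix.mul_apply, Matrix.diagonal_apply, Matrix.transpose_apply, mul_ite,
      mul_zero, Finset.sum_ite_eq', Finset.mem_univ, if_true]
    refine Finset.sum_congr rfl fun j _ => ?_
    simp only [hwdef]
    ring
  have habs : ∀ i, |Z i i| ≤ ∑ j, w i j * |μ j| := by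
    intro i
    rw [hentry i]
    refine (Finset.abs_sum_le_sum_abs _ _).trans ?_
    refine Finset.sum_le_sum fun j _ => ?_
    rw [abs_mul, abs_of_nonneg (hw0 i j)]
  unfold lpNorm
  split_ifs with htop
  · rcases Nat.eq_zero_or_pos n with hn | hn
    · subst hn
      simp [Real.iSup_of_isEmpty]
    · have hne : Nonempty (Fin n) := ⟨⟨0, hn⟩⟩
      have hbdd : BddAbove (Set.range fun j => |μ j|) := Set.Finite.bddAbove (Set.finite_range _)
      refine ciSup_le fun i => ?_
      refine (habs i).trans ?_
      have : ∑ j, w i j * |μ j| ≤ ∑ j, w i j * ⨆ k, |μ k| := by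
        refine Finset.sum_le_sum fun j _ => ?_
        exact mul_le_mul_of_nonneg_left (le_ciSup hbdd j) (hw0 i j)
      refine this.trans ?_
      rw [← Finset.sum_mul, hrow i, one_mul]
  · have hq1 : 1 ≤ p.toReal := by
      rw [← ENNReal.toReal_one]
      exact ENNReal.toReal_mono htop hp
    have hq0 : 0 ≤ p.toReal := by linarith
    have key : ∑ i, |Z i i| ^ p.toReal ≤ ∑ j, |μ j| ^ p.toReal := by
      have step : ∀ i, |Z i i| ^ p.toReal ≤ ∑ j, w i j * |μ j| ^ p.toReal := by
        intro i
        refine le_trans (Real.rpow_le_rpow (abs_nonneg _) (habs i) hq0) ?_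
        exact Real.rpow_arith_mean_le_arith_mean_rpow Finset.univ (w i) (fun j => |μ j|)
          (fun j _ => hw0 i j) (hrow i) (fun j _ => abs_nonneg _) hq1
      refine le_trans (Finset.sum_le_sum fun i _ => step i) ?_
      rw [Finset.sum_comm]
      refine le_of_eq ?_
      refine Finset.sum_congr rfl fun j _ => ?_
      rw [← Finset.sum_mul, hcol j, one_mul]
    refine Real.rpow_le_rpow ?_ key ?_
    · exact Finset.sum_nonneg fun i _ => Real.rpow_nonneg (abs_nonneg _) _
    · positivity

lemma frob_conj {n : ℕ} (U A : Matrix (Fin n) (Fin n) ℝ)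
    (hU : U * Uᵀ = 1) (hU' : Uᵀ * U = 1) : frobNorm (U * A * Uᵀ) = frobNorm A := by
  unfold frobNorm
  congr 1
  have h : (U * A * Uᵀ)ᵀ * (U * A * Uᵀ) = U * (Aᵀ * A) * Uᵀ := by
    simp only [Matrix.transpose_mul, Matrix.transpose_transpose, Matrix.mul_assoc]
    rw [← Matrix.mul_assoc Uᵀ U, hU', Matrix.one_mul]
  rw [h, Matrix.trace_mul_comm, ← Matrix.mul_assoc, ← Matrix.mul_assoc, hU', Matrix.one_mul]

lemma frob_diag {n : ℕ} (v : Fin n → ℝ) :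
    frobNorm (Matrix.diagonal v) = Real.sqrt (∑ i, (v i) ^ 2) := by
  unfold frobNorm
  rw [Matrix.diagonal_transpose, Matrix.diagonal_mul_diagonal, Matrix.trace_diagonal]
  congr 1
  exact Finset.sum_congr rfl fun i _ => (sq (v i)).symm

lemma frob_sq_entries {n : ℕ} (A : Matrix (Fin n) (Fin n) ℝ) :
    (Aᵀ * A).trace = ∑ i, ∑ j, (A j i) ^ 2 := by
  simp only [Matrix.trace, Matrix.diag, Matrix.mul_apply, Matrix.transpose_apply]
  exact Finset.sum_congr rfl fun i _ => Finset.sum_congr rfl fun j _ => (sq (A j i)).symm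

lemma frob_diag_lower {n : ℕ} (M : Matrix (Fin n) (Fin n) ℝ) :
    Real.sqrt (∑ i, (M i i) ^ 2) ≤ frobNorm M := by
  unfold frobNorm
  refine Real.sqrt_le_sqrt ?_
  rw [frob_sq_entries]
  refine Finset.sum_le_sum fun i _ => ?_
  exact Finset.single_le_sum (fun j (_ : j ∈ Finset.univ) => sq_nonneg (M j i))
    (Finset.mem_univ i)

end Aux

/-- If `X = U diag(λ) Uᵀ` with `U` orthogonal, and `π` is the Euclidean
projection of `λ` onto the `ℓ_p`-ball `B_r^p`, then `U diag(π) Uᵀ` is the Frobenius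
projection of `X` onto the Schatten ball `S_r^p = {Y ∈ Sⁿ : ‖Y‖_p ≤ r}`; i.e. it belongs
to `S_r^p` and is at minimal Frobenius distance from `X` among all points of `S_r^p`. -/
theorem stmt15 {n : ℕ} (p : ℝ≥0∞) (hp : 1 ≤ p) (r : ℝ) (hr : 0 ≤ r)
    (X U : Matrix (Fin n) (Fin n) ℝ) (lam : Fin n → ℝ)
    (hXsymm : X.IsSymm) (hU : U * Uᵀ = 1) (hU' : Uᵀ * U = 1)
    (hX : X = U * Matrix.diagonal lam * Uᵀ)
    (pr : Fin n → ℝ) (hprmem : lpNorm p pr ≤ r)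
    (hpr : ∀ x : Fin n → ℝ, lpNorm p x ≤ r →
      (∑ i, (lam i - pr i) ^ 2) ≤ (∑ i, (lam i - x i) ^ 2)) :
    (U * Matrix.diagonal pr * Uᵀ).IsSymm ∧
    schattenNorm p (U * Matrix.diagonal pr * Uᵀ) ≤ r ∧
    ∀ Y : Matrix (Fin n) (Fin n) ℝ, Y.IsSymm → schattenNorm p Y ≤ r →
      frobNorm (X - U * Matrix.diagonal pr * Uᵀ) ≤ frobNorm (X - Y) := by
  refine ⟨?_, ?_, ?_⟩
  · rw [Matrix.IsSymm, Matrix.transpose_mul, Matrix.transpose_mul, Matrix.transpose_transpose,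
      Matrix.diagonal_transpose, Matrix.mul_assoc]
  · rw [schattenNorm_conj_diag p pr hU hU']
    exact hprmem
  · intro Y hYsymm hYnorm
    set Z : Matrix (Fin n) (Fin n) ℝ := Uᵀ * Y * U with hZdef
    have hZherm : Z.IsHermitian := by
      rw [Matrix.IsHermitian, Matrix.conjTranspose_eq_transpose_of_trivial, hZdef,
        Matrix.transpose_mul, Matrix.transpose_mul, Matrix.transpose_transpose, hYsymm.eq,
        Matrix.mul_assoc]
    have hZnorm : schattenNorm p Z ≤ r := by
      rw [hZdef, schattenNorm_conj_right p Y U hU hU']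
      exact hYnorm
    have hdiagZ : lpNorm p (fun i => Z i i) ≤ r :=
      (lpNorm_diag_le_schattenNorm hp hZherm).trans hZnorm
    have hkey := hpr (fun i => Z i i) hdiagZ
    -- rewrite X - U diag pr Uᵀ
    have h1 : X - U * Matrix.diagonal pr * Uᵀ
        = U * Matrix.diagonal (fun i => lam i - pr i) * Uᵀ := by
      rw [hX]
      have : Matrix.diagonal (fun i => lam i - pr i)
          = Matrix.diagonal lam - Matrix.diagonal pr := by
        rw [Matrix.diagonal_sub]
      rw [this, Matrix.mul_sub, Matrix.sub_mul]
    have h2 : X - Y = U * (Matrix.diagonal lam - Z) * Uᵀ := by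
      rw [Matrix.mul_sub, Matrix.sub_mul, ← hX]
      congr 1
      rw [hZdef]
      symm
      calc U * (Uᵀ * Y * U) * Uᵀ = (U * Uᵀ) * Y * (U * Uᵀ) := by
            simp only [Matrix.mul_assoc]
        _ = Y := by rw [hU, Matrix.one_mul, Matrix.mul_one]
    have e1 : frobNorm (X - U * Matrix.diagonal pr * Uᵀ)
        = Real.sqrt (∑ i, (lam i - pr i) ^ 2) := by
      rw [h1, frob_conj _ _ hU hU', frob_diag]
    have e2 : frobNorm (X - Y) = frobNorm (Matrix.diagonal lam - Z) := by
      rw [h2, frob_conj _ _ hU hU']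
    have e3 : Real.sqrt (∑ i, (lam i - Z i i) ^ 2) ≤ frobNorm (Matrix.diagonal lam - Z) := by
      have := frob_diag_lower (Matrix.diagonal lam - Z)
      have hdiag : ∀ i, (Matrix.diagonal lam - Z) i i = lam i - Z i i := by
        intro i
        simp [Matrix.sub_apply, Matrix.diagonal_apply_eq]
      calc Real.sqrt (∑ i, (lam i - Z i i) ^ 2)
          = Real.sqrt (∑ i, ((Matrix.diagonal lam - Z) i i) ^ 2) := by
            congr 1
            exact Finset.sum_congr rfl fun i _ => by rw [hdiag i]
        _ ≤ frobNorm (Matrix.diagonal lam - Z) := frob_diag_lower _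
    rw [e1, e2]
    refine le_trans ?_ e3
    exact Real.sqrt_le_sqrt hkey
end

section
/- Let p ∈ [1,∞], r ≥ 0, and S_r^p := {Y ∈ Sⁿ : ‖Y‖_p ≤ r}. If X ∈ S₊ⁿ (i.e., X is symmetric positive semidefinite), then the Frobenius-orthogonal projection Π_{S_r^p}(X) is also positive semidefinite, and consequently Π_{S_r^p ∩ S₊ⁿ}(X) = Π_{S_r^p}(X). -/
open Matrix
open scoped ENNReal

section Aux

open Polynomial

theorem aux_charpoly_unitary_conj {n : ℕ} (U : Matrix.unitaryGroup (Fin n) ℝ)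
    (B : Matrix (Fin n) (Fin n) ℝ) :
    (U.val * B * star U.val).charpoly = B.charpoly := by
  have hUV : U.val * star U.val = 1 := Matrix.mem_unitaryGroup_iff.mp U.2
  have hmap : ∀ (P Q : Matrix (Fin n) (Fin n) ℝ), P * Q = 1 →
      P.map (C : ℝ →+* ℝ[X]) * Q.map C = 1 := by
    intro P Q h
    rw [← Matrix.map_mul, h, Matrix.map_one _ (map_zero C) (map_one C)]
  have key : charmatrix (U.val * B * star U.val)
      = U.val.map (C : ℝ →+* ℝ[X]) * charmatrix B * (star U.val).map C := by
    rw [charmatrix, charmatrix]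
    rw [Matrix.mul_sub, Matrix.sub_mul]
    congr 1
    · rw [Matrix.scalar_apply, ← Matrix.smul_one_eq_diagonal, Matrix.mul_smul, Matrix.mul_one,
        Matrix.smul_mul, hmap _ _ hUV]
    · simp only [RingHom.mapMatrix_apply, Matrix.map_mul]
  have hdet : (U.val.map (C : ℝ →+* ℝ[X])).det * ((star U.val).map (C : ℝ →+* ℝ[X])).det = 1 := by
    rw [← Matrix.det_mul, hmap _ _ hUV, Matrix.det_one]
  rw [Matrix.charpoly, key, Matrix.det_mul, Matrix.det_mul, Matrix.charpoly]
  rw [mul_comm, ← mul_assoc]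
  rw [mul_comm ((star U.val).map _).det]
  rw [hdet, one_mul]

theorem aux_charpoly_diag {n : ℕ} (d : Fin n → ℝ) :
    (diagonal d).charpoly = ∏ i, (X - C (d i)) := by
  rw [Matrix.charpoly_of_upperTriangular _ (Matrix.blockTriangular_diagonal d)]
  simp

theorem aux_roots_prod_fin {n : ℕ} (d : Fin n → ℝ) :
    (∏ i, (X - C (d i))).roots = Finset.univ.val.map d := by
  have := Polynomial.roots_multiset_prod_X_sub_C (Finset.univ.val.map d)
  rw [Multiset.map_map] at this
  exact this

theorem aux_eig_multiset {n : ℕ} {B : Matrix (Fin n) (Fin n) ℝ} (hB : B.IsHermitian)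
    (U : Matrix.unitaryGroup (Fin n) ℝ) (d : Fin n → ℝ)
    (hBeq : B = U.val * diagonal d * star U.val) :
    Multiset.map hB.eigenvalues Finset.univ.val = Multiset.map d Finset.univ.val := by
  have hofReal : (RCLike.ofReal : ℝ → ℝ) = id := by ext x; simp
  have h1 : B.charpoly = ∏ i, (X - C (hB.eigenvalues i)) := by
    conv_lhs => rw [hB.spectral_theorem, Unitary.conjStarAlgAut_apply]
    rw [aux_charpoly_unitary_conj, hofReal, Function.id_comp, aux_charpoly_diag]
  have h2 : B.charpoly = ∏ i, (X - C (d i)) := by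
    rw [hBeq, aux_charpoly_unitary_conj, aux_charpoly_diag]
  have h3 := congrArg Polynomial.roots (h1.symm.trans h2)
  rwa [aux_roots_prod_fin, aux_roots_prod_fin] at h3

theorem aux_herm_conj {n : ℕ} (U : Matrix.unitaryGroup (Fin n) ℝ) (d : Fin n → ℝ) :
    (U.val * diagonal d * star U.val).IsHermitian := by
  rw [Matrix.star_eq_conjTranspose]
  exact Matrix.isHermitian_mul_mul_conjTranspose _ (Matrix.isHermitian_diagonal d)

theorem aux_conj_mul_conj {n : ℕ} (U : Matrix.unitaryGroup (Fin n) ℝ) (a b : Fin n → ℝ) :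
    (U.val * diagonal a * star U.val) * (U.val * diagonal b * star U.val)
      = U.val * diagonal (fun i => a i * b i) * star U.val := by
  have hVU : star U.val * U.val = 1 := Matrix.mem_unitaryGroup_iff'.mp U.2
  rw [show (U.val * diagonal a * star U.val) * (U.val * diagonal b * star U.val)
      = U.val * (diagonal a * ((star U.val * U.val) * (diagonal b * star U.val))) by
    simp only [mul_assoc]]
  rw [hVU, one_mul, ← mul_assoc (diagonal a), diagonal_mul_diagonal]
  simp only [mul_assoc]

theorem aux_trace_conj {n : ℕ} (U : Matrix.unitaryGroup (Fin n) ℝ)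
    (B : Matrix (Fin n) (Fin n) ℝ) :
    (U.val * B * star U.val).trace = B.trace := by
  have hVU : star U.val * U.val = 1 := Matrix.mem_unitaryGroup_iff'.mp U.2
  rw [Matrix.trace_mul_cycle, hVU, one_mul]

theorem aux_singVals_multiset {n : ℕ} (U : Matrix.unitaryGroup (Fin n) ℝ) (d : Fin n → ℝ)
    {B : Matrix (Fin n) (Fin n) ℝ} (hBeq : B = U.val * diagonal d * star U.val) :
    Multiset.map (singVals B) Finset.univ.val
      = Multiset.map (fun i => |d i|) Finset.univ.val := by
  have hBher : B.IsHermitian := hBeq ▸ aux_herm_conj U d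
  have hBT : Bᵀ = B := by
    have h := hBher; rwa [Matrix.IsHermitian, conjTranspose_eq_transpose_of_trivial] at h
  have hBB : Bᵀ * B = U.val * diagonal (fun i => d i * d i) * star U.val := by
    rw [hBT]
    conv_lhs => rw [hBeq]
    exact aux_conj_mul_conj U d d
  have hmul := aux_eig_multiset (Matrix.isHermitian_conjTranspose_mul_self B) U
    (fun i => d i * d i) hBB
  have h2 := congrArg (Multiset.map Real.sqrt) hmul
  rw [Multiset.map_map, Multiset.map_map] at h2
  exact h2.trans (Multiset.map_congr rfl fun i _ => Real.sqrt_mul_self_eq_abs _)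

theorem aux_sum_of_multiset_eq {n : ℕ} {f g : Fin n → ℝ}
    (h : Multiset.map f Finset.univ.val = Multiset.map g Finset.univ.val) (φ : ℝ → ℝ) :
    ∑ i, φ (f i) = ∑ i, φ (g i) := by
  have := congrArg (fun s => (Multiset.map φ s).sum) h
  simpa [Multiset.map_map, Finset.sum, Function.comp_def] using this

theorem aux_range_of_multiset_eq {n : ℕ} {f g : Fin n → ℝ}
    (h : Multiset.map f Finset.univ.val = Multiset.map g Finset.univ.val) :
    Set.range f = Set.range g := by
  ext x
  simp only [Set.mem_range]
  constructor <;> intro ⟨i, hi⟩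
  · have hx : x ∈ Multiset.map g Finset.univ.val := by
      rw [← h]; exact Multiset.mem_map.mpr ⟨i, Finset.mem_univ i, hi⟩
    obtain ⟨j, _, hj⟩ := Multiset.mem_map.mp hx
    exact ⟨j, hj⟩
  · have hx : x ∈ Multiset.map f Finset.univ.val := by
      rw [h]; exact Multiset.mem_map.mpr ⟨i, Finset.mem_univ i, hi⟩
    obtain ⟨j, _, hj⟩ := Multiset.mem_map.mp hx
    exact ⟨j, hj⟩

theorem aux_trace_transpose_mul_self_nonneg {n m : ℕ} (A : Matrix (Fin m) (Fin n) ℝ) :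
    0 ≤ (Aᵀ * A).trace := by
  simp only [Matrix.trace, Matrix.diag, Matrix.mul_apply, Matrix.transpose_apply]
  exact Finset.sum_nonneg fun i _ => Finset.sum_nonneg fun j _ => mul_self_nonneg _

theorem aux_trace_mul_nonneg {n : ℕ} {A B : Matrix (Fin n) (Fin n) ℝ}
    (hA : A.PosSemidef) (hB : B.PosSemidef) : 0 ≤ (A * B).trace := by
  obtain ⟨P, hP⟩ : ∃ P : Matrix (Fin n) (Fin n) ℝ, A = Pᴴ * P := by
    open scoped MatrixOrder Matrix.Norms.L2Operator in
    exact CStarAlgebra.nonneg_iff_eq_star_mul_self.mp hA.nonneg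
  obtain ⟨Q, hQ⟩ : ∃ Q : Matrix (Fin n) (Fin n) ℝ, B = Qᴴ * Q := by
    open scoped MatrixOrder Matrix.Norms.L2Operator in
    exact CStarAlgebra.nonneg_iff_eq_star_mul_self.mp hB.nonneg
  have : (A * B).trace = ((P * Qᴴ)ᴴ * (P * Qᴴ)).trace := by
    rw [hP, hQ, conjTranspose_mul, conjTranspose_conjTranspose]
    rw [show Q * Pᴴ * (P * Qᴴ) = Q * (Pᴴ * P * Qᴴ) by simp only [mul_assoc]]
    rw [Matrix.trace_mul_comm Q]
    simp only [mul_assoc]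
  rw [this, Matrix.conjTranspose_eq_transpose_of_trivial]
  exact aux_trace_transpose_mul_self_nonneg _

end Aux

/-- If `X ⪰ 0` and `M` is the Frobenius projection of `X` onto the
Schatten ball `S_r^p = {Y ∈ Sⁿ : ‖Y‖_p ≤ r}`, then `M ⪰ 0`; consequently `M` is also the
Frobenius projection of `X` onto `S_r^p ∩ S₊ⁿ` (it lies in that set and minimizes the
Frobenius distance to `X` over it). -/
theorem stmt16 {n : ℕ} (p : ℝ≥0∞) (hp : 1 ≤ p) (r : ℝ) (hr : 0 ≤ r)
    (X : Matrix (Fin n) (Fin n) ℝ) (hX : X.PosSemidef)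
    (M : Matrix (Fin n) (Fin n) ℝ) (hMsymm : M.IsSymm) (hMball : schattenNorm p M ≤ r)
    (hMproj : ∀ Y : Matrix (Fin n) (Fin n) ℝ, Y.IsSymm → schattenNorm p Y ≤ r →
      frobNorm (X - M) ≤ frobNorm (X - Y)) :
    M.PosSemidef ∧
    ∀ Y : Matrix (Fin n) (Fin n) ℝ, Y.IsSymm → schattenNorm p Y ≤ r → Y.PosSemidef →
      frobNorm (X - M) ≤ frobNorm (X - Y) := by
  refine ⟨?_, fun Y hY1 hY2 _ => hMproj Y hY1 hY2⟩
  have hM' : M.IsHermitian := by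
    rwa [Matrix.IsHermitian, conjTranspose_eq_transpose_of_trivial, ← Matrix.IsSymm]
  set U := hM'.eigenvectorUnitary with hU
  set lam := hM'.eigenvalues with hlam
  have hofReal : (RCLike.ofReal : ℝ → ℝ) = id := by ext x; simp
  have hspec : M = U.val * diagonal lam * star U.val := by
    conv_lhs => rw [hM'.spectral_theorem, Unitary.conjStarAlgAut_apply]
    rw [hofReal, Function.id_comp]
  set g : Fin n → ℝ := fun i => max (lam i) 0 with hg
  set e : Fin n → ℝ := fun i => g i - lam i with he
  set Mp : Matrix (Fin n) (Fin n) ℝ := U.val * diagonal g * star U.val with hMp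
  -- basic facts
  have hMpher : Mp.IsHermitian := aux_herm_conj U g
  have hMpsymm : Mp.IsSymm := by
    have h := hMpher
    rwa [Matrix.IsHermitian, conjTranspose_eq_transpose_of_trivial, ← Matrix.IsSymm] at h
  have hgabs : ∀ i, |g i| = g i := fun i => abs_of_nonneg (le_max_right _ _)
  have hgle : ∀ i, |g i| ≤ |lam i| := by
    intro i
    rw [hgabs i]
    exact max_le (le_abs_self _) (abs_nonneg _)
  -- Schatten norm of Mp
  have hsvMp := aux_singVals_multiset U g hMp
  have hsvM := aux_singVals_multiset U lam hspec
  have hball : schattenNorm p Mp ≤ r := by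
    refine le_trans ?_ hMball
    unfold schattenNorm
    by_cases hpt : p = ⊤
    · simp only [hpt, if_pos rfl, if_true]
      have h1 : Set.range (singVals Mp) = Set.range fun i => |g i| :=
        aux_range_of_multiset_eq hsvMp
      have h2 : Set.range (singVals M) = Set.range fun i => |lam i| :=
        aux_range_of_multiset_eq hsvM
      have e1 : (⨆ i, singVals Mp i) = ⨆ i, |g i| := by rw [iSup, iSup, h1]
      have e2 : (⨆ i, singVals M i) = ⨆ i, |lam i| := by rw [iSup, iSup, h2]
      rw [e1, e2]
      rcases isEmpty_or_nonempty (Fin n) with hn | hn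
      · rw [Real.iSup_of_isEmpty, Real.iSup_of_isEmpty]
      · exact ciSup_mono (Set.Finite.bddAbove (Set.finite_range _)) hgle
    · simp only [if_neg hpt]
      have hq0 : 0 ≤ p.toReal := ENNReal.toReal_nonneg
      have h1 : ∑ i, singVals Mp i ^ p.toReal = ∑ i, |g i| ^ p.toReal :=
        aux_sum_of_multiset_eq hsvMp (fun x => x ^ p.toReal)
      have h2 : ∑ i, singVals M i ^ p.toReal = ∑ i, |lam i| ^ p.toReal :=
        aux_sum_of_multiset_eq hsvM (fun x => x ^ p.toReal)
      rw [h1, h2]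
      refine Real.rpow_le_rpow (Finset.sum_nonneg fun i _ => Real.rpow_nonneg (abs_nonneg _) _)
        (Finset.sum_le_sum fun i _ => Real.rpow_le_rpow (abs_nonneg _) (hgle i) hq0)
        (by positivity)
  -- projection inequality
  have hproj := hMproj Mp hMpsymm hball
  -- trace computations
  have hD : Mp - M = U.val * diagonal e * star U.val := by
    rw [hMp, hspec, he]
    rw [← Matrix.sub_mul, ← Matrix.mul_sub, Matrix.diagonal_sub]
  have hXT : Xᵀ = X := by
    have h := hX.isHermitian
    rwa [Matrix.IsHermitian, conjTranspose_eq_transpose_of_trivial] at h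
  have hMT : Mᵀ = M := hMsymm
  have hMpT : Mpᵀ = Mp := hMpsymm
  have he0 : ∀ i, 0 ≤ e i := fun i => sub_nonneg.mpr (le_max_left _ _)
  have hDpsd : (Mp - M).PosSemidef := by
    rw [hD, Matrix.star_eq_conjTranspose]
    exact (Matrix.posSemidef_diagonal_iff.mpr fun i => he0 i).mul_mul_conjTranspose_same _
  have htXD : 0 ≤ (X * (Mp - M)).trace := aux_trace_mul_nonneg hX hDpsd
  have htMD : (M * (Mp - M)).trace = ∑ i, lam i * e i := by
    rw [hD]
    conv_lhs => rw [hspec]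
    rw [aux_conj_mul_conj, aux_trace_conj, Matrix.trace_diagonal]
  have htDD : ((Mp - M) * (Mp - M)).trace = ∑ i, e i * e i := by
    rw [hD, aux_conj_mul_conj, aux_trace_conj, Matrix.trace_diagonal]
  have hlame : ∀ i, lam i * e i = -(e i * e i) := by
    intro i
    have hei : e i = max (lam i) 0 - lam i := rfl
    rcases le_or_gt 0 (lam i) with h | h
    · have hz : e i = 0 := by rw [hei, max_eq_left h, sub_self]
      rw [hz]; ring
    · have hz : e i = -lam i := by rw [hei, max_eq_right h.le, zero_sub]
      rw [hz]; ring
  have hsumlame : ∑ i, lam i * e i = -∑ i, e i * e i := by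
    rw [← Finset.sum_neg_distrib]
    exact Finset.sum_congr rfl fun i _ => hlame i
  -- expansion of the squared Frobenius distance
  have hXMp : X - Mp = (X - M) - (Mp - M) := (sub_sub_sub_cancel_right X Mp M).symm
  have hAT : (X - M)ᵀ = X - M := by rw [transpose_sub, hXT, hMT]
  have hDT : (Mp - M)ᵀ = Mp - M := by rw [transpose_sub, hMpT, hMT]
  have hT2 : ((X - Mp)ᵀ * (X - Mp)).trace
      = ((X - M)ᵀ * (X - M)).trace - 2 * ((X - M) * (Mp - M)).trace
        + ((Mp - M) * (Mp - M)).trace := by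
    rw [hXMp, transpose_sub, hAT, hDT]
    generalize X - M = A
    generalize Mp - M = D
    rw [Matrix.sub_mul, Matrix.mul_sub, Matrix.mul_sub, Matrix.trace_sub, Matrix.trace_sub,
      Matrix.trace_sub, Matrix.trace_mul_comm D A]
    ring
  have hAD : ((X - M) * (Mp - M)).trace
      = (X * (Mp - M)).trace - (M * (Mp - M)).trace := by
    rw [Matrix.sub_mul, Matrix.trace_sub]
  have hT2' : ((X - Mp)ᵀ * (X - Mp)).trace
      = ((X - M)ᵀ * (X - M)).trace - 2 * (X * (Mp - M)).trace - ∑ i, e i * e i := by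
    rw [hT2, hAD, htMD, htDD, hsumlame]
    ring
  -- the projection property gives the reverse inequality
  have hT1nn := aux_trace_transpose_mul_self_nonneg (X - M)
  have hT2nn := aux_trace_transpose_mul_self_nonneg (X - Mp)
  have hT1leT2 : ((X - M)ᵀ * (X - M)).trace ≤ ((X - Mp)ᵀ * (X - Mp)).trace := by
    have h := hproj
    unfold frobNorm at h
    calc ((X - M)ᵀ * (X - M)).trace
        = Real.sqrt (((X - M)ᵀ * (X - M)).trace) ^ 2 := (Real.sq_sqrt hT1nn).symm
      _ ≤ Real.sqrt (((X - Mp)ᵀ * (X - Mp)).trace) ^ 2 :=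
          pow_le_pow_left₀ (Real.sqrt_nonneg _) h 2
      _ = ((X - Mp)ᵀ * (X - Mp)).trace := Real.sq_sqrt hT2nn
  have hsum0 : ∑ i, e i * e i ≤ 0 := by
    rw [hT2'] at hT1leT2
    linarith
  have hsum0' : ∑ i, e i * e i = 0 :=
    le_antisymm hsum0 (Finset.sum_nonneg fun i _ => mul_self_nonneg _)
  have hei0 : ∀ i, 0 ≤ lam i := by
    intro i
    have := (Finset.sum_eq_zero_iff_of_nonneg
      (fun i _ => mul_self_nonneg (e i))).mp hsum0' i (Finset.mem_univ i)
    have hez : e i = 0 := mul_self_eq_zero.mp this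
    have : max (lam i) 0 = lam i := by
      have : max (lam i) 0 - lam i = 0 := hez
      linarith
    rw [← this]
    exact le_max_right _ _
  exact hM'.posSemidef_iff_eigenvalues_nonneg.mpr hei0
end
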